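/- arXiv:2207.10079 — 2 statements merged into one kernel-verified Lean document; each statement's English description precedes it below -/
import Mathlib

section
/- Let F, S, S^f : ℝ → Matrix n n ℝ be differentiable with F(t) invertible and S(t) symmetric for every t, let p0 : ℝ → ℝ be a positive function, and let ℓ0 > 0, f^p > 0, k_off be real constants. Set l = F'·F⁻¹, τ = F·S·Fᵀ, τ^f = F·S^f·Fᵀ and E = ½(FᵀF − I). If τ satisfies the Kirchhoff-stress evolution equation τ' − l·τ − τ·lᵀ = −(1/(ℓ0 p0 f^p)) · (τ : l^{sym}) · τ + τ^f − k_off · τ for all t, then S satisfies the fully material evolution equation S' = −(1/(ℓ0 p0 f^p)) · (S : E') · S + S^f − k_off · S. -/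
attribute [local instance] Matrix.normedAddCommGroup Matrix.normedSpace

open Matrix

lemma hasDerivAt_matrix {n : ℕ} {M : ℝ → Matrix (Fin n) (Fin n) ℝ}
    {M' : Matrix (Fin n) (Fin n) ℝ} {t : ℝ} :
    HasDerivAt M M' t ↔ ∀ i j, HasDerivAt (fun s => M s i j) (M' i j) t := by
  exact hasDerivAt_pi.trans (forall_congr' fun i => hasDerivAt_pi)

lemma HasDerivAt.matmul {n : ℕ} {A B : ℝ → Matrix (Fin n) (Fin n) ℝ}
    {A' B' : Matrix (Fin n) (Fin n) ℝ} {t : ℝ}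
    (hA : HasDerivAt A A' t) (hB : HasDerivAt B B' t) :
    HasDerivAt (fun s => A s * B s) (A' * B t + A t * B') t := by
  rw [hasDerivAt_matrix] at *
  intro i j
  have h : HasDerivAt (fun s => ∑ k, A s i k * B s k j)
      (∑ k, (A' i k * B t k j + A t i k * B' k j)) t :=
    HasDerivAt.fun_sum fun k _ => (hA i k).mul (hB k j)
  have e : ∀ s, (A s * B s) i j = ∑ k, A s i k * B s k j := fun s => rfl
  simp only [e]
  simpa [Finset.sum_add_distrib, Matrix.add_apply, Matrix.mul_apply] using h

lemma HasDerivAt.mtranspose {n : ℕ} {A : ℝ → Matrix (Fin n) (Fin n) ℝ}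
    {A' : Matrix (Fin n) (Fin n) ℝ} {t : ℝ} (hA : HasDerivAt A A' t) :
    HasDerivAt (fun s => (A s)ᵀ) A'ᵀ t := by
  rw [hasDerivAt_matrix] at *
  intro i j
  exact hA j i


/-- Lagrangian form of the active stress evolution: let `F, S, S^f : ℝ → Matrix n n ℝ` be
differentiable with `F t` invertible and `S t` symmetric, `p0 > 0`, `ℓ0 > 0`, `f^p > 0`,
and set `l = F'·F⁻¹`, `τ = F·S·Fᵀ`, `τ^f = F·S^f·Fᵀ`, `E = ½(FᵀF − I)`. If `τ` satisfies
`τ' − l·τ − τ·lᵀ = −(1/(ℓ0 p0 f^p))·(τ : l^{sym})·τ + τ^f − k_off·τ` for all `t`, then `S`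
satisfies `S' = −(1/(ℓ0 p0 f^p))·(S : E')·S + S^f − k_off·S`
(Frobenius inner product `A:B = trace (Aᵀ * B)`). -/
theorem active_piola_kirchhoff_evolution
    (n : ℕ) (F S Sf F' S' : ℝ → Matrix (Fin n) (Fin n) ℝ) (p0 : ℝ → ℝ)
    (ℓ0 fp koff : ℝ) (hℓ0 : 0 < ℓ0) (hfp : 0 < fp) (hp0 : ∀ t : ℝ, 0 < p0 t)
    (hF : ∀ t : ℝ, HasDerivAt F (F' t) t)
    (hS : ∀ t : ℝ, HasDerivAt S (S' t) t)
    (hSf : Differentiable ℝ Sf)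
    (hFinv : ∀ t : ℝ, IsUnit (F t).det)
    (hSsym : ∀ t : ℝ, (S t)ᵀ = S t)
    (hkirchhoff : ∀ t : ℝ,
      deriv (fun s : ℝ => F s * S s * (F s)ᵀ) t
          - (F' t * (F t)⁻¹) * (F t * S t * (F t)ᵀ)
          - (F t * S t * (F t)ᵀ) * (F' t * (F t)⁻¹)ᵀ
        = (-(1 / (ℓ0 * p0 t * fp)) *
              (((F t * S t * (F t)ᵀ)ᵀ *
                ((2⁻¹ : ℝ) • ((F' t * (F t)⁻¹) + (F' t * (F t)⁻¹)ᵀ))).trace))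
            • (F t * S t * (F t)ᵀ)
          + F t * Sf t * (F t)ᵀ - koff • (F t * S t * (F t)ᵀ)) :
    ∀ t : ℝ,
      S' t = (-(1 / (ℓ0 * p0 t * fp)) *
            (((S t)ᵀ * deriv (fun s : ℝ => (2⁻¹ : ℝ) • ((F s)ᵀ * F s - 1)) t).trace))
          • S t
        + Sf t - koff • S t := by
  intro t
  have hFtr : ∀ s, HasDerivAt (fun u => (F u)ᵀ) (F' s)ᵀ s := fun s => (hF s).mtranspose
  have hτ : HasDerivAt (fun s => F s * S s * (F s)ᵀ)
      ((F' t * S t + F t * S' t) * (F t)ᵀ + (F t * S t) * (F' t)ᵀ) t :=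
    ((hF t).matmul (hS t)).matmul (hFtr t)
  have hτd := hτ.deriv
  have hE : HasDerivAt (fun s : ℝ => (2⁻¹ : ℝ) • ((F s)ᵀ * F s - 1))
      ((2⁻¹ : ℝ) • ((F' t)ᵀ * F t + (F t)ᵀ * F' t)) t := by
    have h := (((hFtr t).matmul (hF t)).sub_const 1).const_smul (2⁻¹ : ℝ)
    exact h
  erw [hE.deriv]
  rw [hSsym]
  have hFdet := hFinv t
  have hFTdet : IsUnit (F t)ᵀ.det := by rwa [Matrix.det_transpose]
  have h1 : (F' t * (F t)⁻¹) * (F t * S t * (F t)ᵀ) = F' t * S t * (F t)ᵀ := by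
    rw [Matrix.mul_assoc (F t) (S t), Matrix.mul_assoc (F' t),
      Matrix.nonsing_inv_mul_cancel_left _ _ hFdet, ← Matrix.mul_assoc]
  have h2 : (F t * S t * (F t)ᵀ) * (F' t * (F t)⁻¹)ᵀ = F t * S t * (F' t)ᵀ := by
    rw [Matrix.transpose_mul, Matrix.transpose_nonsing_inv, Matrix.mul_assoc (F t * S t),
      Matrix.mul_nonsing_inv_cancel_left _ _ hFTdet]
  have htr : ((F t * S t * (F t)ᵀ)ᵀ *
        ((2⁻¹ : ℝ) • ((F' t * (F t)⁻¹) + (F' t * (F t)⁻¹)ᵀ))).trace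
      = ((S t) * ((2⁻¹ : ℝ) • ((F' t)ᵀ * F t + (F t)ᵀ * F' t))).trace := by
    rw [Matrix.mul_smul, Matrix.mul_smul, Matrix.trace_smul, Matrix.trace_smul,
      Matrix.mul_add, Matrix.mul_add, Matrix.trace_add, Matrix.trace_add,
      Matrix.transpose_mul, Matrix.transpose_mul, Matrix.transpose_transpose, hSsym]
    congr 2
    · rw [Matrix.trace_mul_comm, Matrix.mul_assoc (F' t),
        Matrix.nonsing_inv_mul_cancel_left _ _ hFdet, Matrix.trace_mul_comm,
        Matrix.mul_assoc (S t), ← Matrix.trace_transpose, Matrix.transpose_mul,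
        Matrix.transpose_mul, Matrix.transpose_transpose, hSsym, Matrix.trace_mul_comm]
    · rw [Matrix.mul_assoc (F t), Matrix.mul_assoc (S t),
        Matrix.transpose_mul (F' t), Matrix.transpose_nonsing_inv,
        Matrix.mul_nonsing_inv_cancel_left _ _ hFTdet,
        Matrix.trace_mul_comm, Matrix.mul_assoc (S t), ← Matrix.trace_transpose,
        Matrix.transpose_mul, Matrix.transpose_mul, Matrix.transpose_transpose, hSsym,
        Matrix.trace_mul_comm]
  have key := hkirchhoff t
  erw [hτd] at key
  rw [h1, h2, htr] at key
  have keyL : (F' t * S t + F t * S' t) * (F t)ᵀ + F t * S t * (F' t)ᵀ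
      - F' t * S t * (F t)ᵀ - F t * S t * (F' t)ᵀ = F t * S' t * (F t)ᵀ := by
    noncomm_ring
  rw [keyL] at key
  set c : ℝ := -(1 / (ℓ0 * p0 t * fp)) *
      ((S t * ((2⁻¹ : ℝ) • ((F' t)ᵀ * F t + (F t)ᵀ * F' t))).trace) with hc
  have cancel : ∀ M : Matrix (Fin n) (Fin n) ℝ,
      (F t)⁻¹ * (F t * M * (F t)ᵀ) * ((F t)ᵀ)⁻¹ = M := by
    intro M
    rw [Matrix.mul_assoc (F t) M, Matrix.nonsing_inv_mul_cancel_left _ _ hFdet,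
      Matrix.mul_nonsing_inv_cancel_right _ _ hFTdet]
  calc S' t = (F t)⁻¹ * (F t * S' t * (F t)ᵀ) * ((F t)ᵀ)⁻¹ := (cancel _).symm
    _ = (F t)⁻¹ * (c • (F t * S t * (F t)ᵀ) + F t * Sf t * (F t)ᵀ
          - koff • (F t * S t * (F t)ᵀ)) * ((F t)ᵀ)⁻¹ := by rw [key]
    _ = c • S t + Sf t - koff • S t := by
        simp only [Matrix.mul_sub, Matrix.sub_mul, Matrix.mul_add, Matrix.add_mul,
          Matrix.mul_smul, Matrix.smul_mul, cancel]
end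

section
/- Let n ≥ 1, let v : ℝⁿ × ℝ → ℝⁿ and c : ℝⁿ × ℝ → ℝ be C¹, and let y : ℝⁿ × ℝ → ℝⁿ be a motion that is C¹ in time and C¹ in space with ∂_t y(X,t) = v(y(X,t), t), such that F(X,t) = D_X y(X,t) is invertible, depends differentiably on t, and satisfies ∂_t F(X,t) = D_x v(y(X,t),t) · F(X,t). If c satisfies the Eulerian continuity equation ∂_t c(x,t) + div_x (c·v)(x,t) = 0 for all (x,t), then for every fixed X the function t ↦ det F(X,t) · c(y(X,t), t) is constant; i.e. the Lagrangian cell number conservation equation d/dt (J c_t) = 0 holds with J = det F. -/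
open scoped BigOperators

noncomputable def detCM (n : ℕ) : ContinuousMultilinearMap ℝ (fun _ : Fin n => (Fin n → ℝ)) ℝ :=
  { toMultilinearMap :=
      (Matrix.detRowAlternating : ((Fin n → ℝ) [⋀^Fin n]→ₗ[ℝ] ℝ)).toMultilinearMap
    cont := (continuous_id : Continuous (id : Matrix (Fin n) (Fin n) ℝ → _)).matrix_det }

lemma detCM_apply (n : ℕ) (m : Fin n → Fin n → ℝ) :
    detCM n m = Matrix.det (Matrix.of m) := rfl

lemma det_hasDerivAt {n : ℕ} {M : ℝ → (Fin n → Fin n → ℝ)} {t : ℝ}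
    (A : Matrix (Fin n) (Fin n) ℝ)
    (h : HasDerivAt M (fun i j => (A * Matrix.of (M t)) i j) t) :
    HasDerivAt (fun s => Matrix.det (Matrix.of (M s)))
      (Matrix.trace A * Matrix.det (Matrix.of (M t))) t := by
  have hD := (detCM n).hasFDerivAt (M t)
  have := hD.comp_hasDerivAt t h
  convert this using 1
  · rfl
  · rfl
  · rfl
  rw [ContinuousMultilinearMap.linearDeriv_apply]
  have key : ∀ i : Fin n,
      detCM n (Function.update (M t) i (fun j => (A * Matrix.of (M t)) i j))
        = A i i * Matrix.det (Matrix.of (M t)) := by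
    intro i
    have hrow : (fun j => (A * Matrix.of (M t)) i j)
        = ∑ k, A i k • (Matrix.of (M t)) k := by
      funext j
      simp [Matrix.mul_apply, Finset.sum_apply]
    rw [detCM_apply]
    have : Matrix.of (Function.update (M t) i (fun j => (A * Matrix.of (M t)) i j))
        = (Matrix.of (M t)).updateRow i (∑ k, A i k • (Matrix.of (M t)) k) := by
      rw [← hrow]; rfl
    rw [this, Matrix.det_updateRow_sum]
    simp
  simp only [key]
  rw [← Finset.sum_mul, Matrix.trace]
  rfl


/-- Lagrangian cell number conservation: if the spatial cell number density `c` satisfies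
the Eulerian continuity equation `∂ₜc + div_x (c v) = 0` and `y` is a motion with velocity
`v`, deformation gradient `F = D_X y` (invertible, differentiable in time with
`∂ₜF = (D_x v ∘ y) · F`), then for every material point `X` the map
`t ↦ det F(X,t) · c(y(X,t), t)` is constant, i.e. `d/dt (J c_t) = 0` with `J = det F`. -/
theorem lagrangian_cell_number_conservation
    (n : ℕ) (hn : 1 ≤ n)
    (v : EuclideanSpace ℝ (Fin n) × ℝ → EuclideanSpace ℝ (Fin n))
    (c : EuclideanSpace ℝ (Fin n) × ℝ → ℝ)
    (y : EuclideanSpace ℝ (Fin n) × ℝ → EuclideanSpace ℝ (Fin n))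
    (F : EuclideanSpace ℝ (Fin n) → ℝ →
      (EuclideanSpace ℝ (Fin n) →L[ℝ] EuclideanSpace ℝ (Fin n)))
    (hv : ContDiff ℝ 1 v) (hc : ContDiff ℝ 1 c)
    (hyt : ∀ (X : EuclideanSpace ℝ (Fin n)) (t : ℝ),
      HasDerivAt (fun s : ℝ => y (X, s)) (v (y (X, t), t)) t)
    (hyX : ∀ (X : EuclideanSpace ℝ (Fin n)) (t : ℝ),
      HasFDerivAt (fun X' => y (X', t)) (F X t) X)
    (hFinv : ∀ (X : EuclideanSpace ℝ (Fin n)) (t : ℝ),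
      LinearMap.det (F X t).toLinearMap ≠ 0)
    (hFt : ∀ (X : EuclideanSpace ℝ (Fin n)) (t : ℝ),
      HasDerivAt (fun s : ℝ => F X s)
        ((fderiv ℝ (fun x => v (x, t)) (y (X, t))).comp (F X t)) t)
    (hcontinuity : ∀ (x : EuclideanSpace ℝ (Fin n)) (t : ℝ),
      deriv (fun s : ℝ => c (x, s)) t
        + ∑ k : Fin n,
            fderiv ℝ (fun x' => c (x', t) * v (x', t) k) x (EuclideanSpace.single k 1)
        = 0) :
    ∀ (X : EuclideanSpace ℝ (Fin n)) (t₁ t₂ : ℝ),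
      LinearMap.det (F X t₁).toLinearMap * c (y (X, t₁), t₁)
        = LinearMap.det (F X t₂).toLinearMap * c (y (X, t₂), t₂) := by
  classical
  set b : Module.Basis (Fin n) ℝ (EuclideanSpace ℝ (Fin n)) :=
    (EuclideanSpace.basisFun (Fin n) ℝ).toBasis with hb
  have hrepr : ∀ (x : EuclideanSpace ℝ (Fin n)) (i : Fin n), b.repr x i = x i := by
    intro x i
    simp only [hb, OrthonormalBasis.coe_toBasis_repr_apply]
    rfl
  have hbase : ∀ i : Fin n, b i = EuclideanSpace.single i 1 := by
    intro i
    simp [hb, OrthonormalBasis.coe_toBasis, EuclideanSpace.basisFun_apply]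
  have hsum : ∀ w : EuclideanSpace ℝ (Fin n),
      ∑ k, w k • (EuclideanSpace.single k 1 : EuclideanSpace ℝ (Fin n)) = w := by
    intro w
    have := b.sum_repr w
    simp only [hrepr, hbase] at this
    exact this
  have hcdiff : Differentiable ℝ c := hc.differentiable one_ne_zero
  have hvdiff : Differentiable ℝ v := hv.differentiable one_ne_zero
  intro X t₁ t₂
  set M : ℝ → (Fin n → Fin n → ℝ) :=
    fun s i j => LinearMap.toMatrix b b (F X s).toLinearMap i j with hM
  have hMentry : ∀ (s : ℝ) (i j : Fin n),
      M s i j = (F X s (EuclideanSpace.single j 1)) i := by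
    intro s i j
    rw [hM]
    simp only [LinearMap.toMatrix_apply, hrepr, hbase]
    rfl
  have hdet : ∀ s : ℝ, LinearMap.det (F X s).toLinearMap = Matrix.det (Matrix.of (M s)) := by
    intro s
    rw [← LinearMap.det_toMatrix b]
    congr 1
  set g : ℝ → ℝ := fun s => Matrix.det (Matrix.of (M s)) * c (y (X, s), s) with hg
  suffices hgc : g t₁ = g t₂ by
    rw [hdet t₁, hdet t₂]; exact hgc
  have hg0 : ∀ t : ℝ, HasDerivAt g 0 t := by
    intro t
    set x₀ : EuclideanSpace ℝ (Fin n) := y (X, t) with hx₀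
    set p : EuclideanSpace ℝ (Fin n) × ℝ := (x₀, t) with hp
    set Dv : EuclideanSpace ℝ (Fin n) →L[ℝ] EuclideanSpace ℝ (Fin n) :=
      fderiv ℝ (fun x => v (x, t)) x₀ with hDv
    set Dc : EuclideanSpace ℝ (Fin n) × ℝ →L[ℝ] ℝ := fderiv ℝ c p with hDc
    set A : Matrix (Fin n) (Fin n) ℝ := LinearMap.toMatrix b b Dv.toLinearMap with hA
    have hAM : ∀ i j : Fin n, (A * Matrix.of (M t)) i j
        = (Dv ((F X t) (EuclideanSpace.single j 1))) i := by
      intro i j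
      have h : A * Matrix.of (M t)
          = LinearMap.toMatrix b b (Dv.toLinearMap ∘ₗ (F X t).toLinearMap) := by
        rw [LinearMap.toMatrix_comp b b b]
        rfl
      rw [h]
      simp only [LinearMap.toMatrix_apply, hrepr, hbase]
      rfl
    have hMd : HasDerivAt M (fun i j => (A * Matrix.of (M t)) i j) t := by
      rw [hasDerivAt_pi]
      intro i
      rw [hasDerivAt_pi]
      intro j
      have h1 : HasDerivAt (fun s => F X s (EuclideanSpace.single j 1))
          (Dv ((F X t) (EuclideanSpace.single j 1))) t := by
        have := (hFt X t).clm_apply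
          (hasDerivAt_const t (EuclideanSpace.single j 1 : EuclideanSpace ℝ (Fin n)))
        simpa using this
      have h2 := (EuclideanSpace.proj i).hasFDerivAt.comp_hasDerivAt t h1
      rw [hAM i j]
      simp only [hMentry]
      exact h2
    have hdetd : HasDerivAt (fun s => Matrix.det (Matrix.of (M s)))
        (Matrix.trace A * Matrix.det (Matrix.of (M t))) t := det_hasDerivAt A hMd
    have hcd : HasFDerivAt c Dc p := (hcdiff p).hasFDerivAt
    have hγ : HasDerivAt (fun s : ℝ => (y (X, s), s)) (v p, 1) t :=
      (hyt X t).prodMk (hasDerivAt_id t)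
    have hch : HasDerivAt (fun s => c (y (X, s), s)) (Dc (v p, 1)) t :=
      hcd.comp_hasDerivAt_of_eq t hγ rfl
    have hgd : HasDerivAt g
        (Matrix.trace A * Matrix.det (Matrix.of (M t)) * c p
          + Matrix.det (Matrix.of (M t)) * Dc (v p, 1)) t := hdetd.mul hch
    -- partial derivative in time
    have hpt : deriv (fun s : ℝ => c (x₀, s)) t = Dc (0, 1) := by
      have hcurve : HasDerivAt (fun s : ℝ => ((x₀ : EuclideanSpace ℝ (Fin n)), s))
          ((0 : EuclideanSpace ℝ (Fin n)), (1 : ℝ)) t :=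
        (hasDerivAt_const t x₀).prodMk (hasDerivAt_id t)
      exact (hcd.comp_hasDerivAt t hcurve).deriv
    have hcx : HasFDerivAt (fun x' : EuclideanSpace ℝ (Fin n) => c (x', t))
        (Dc.comp (ContinuousLinearMap.inl ℝ (EuclideanSpace ℝ (Fin n)) ℝ)) x₀ :=
      hcd.comp x₀ (hasFDerivAt_prodMk_left x₀ t)
    have hvx : HasFDerivAt (fun x' : EuclideanSpace ℝ (Fin n) => v (x', t)) Dv x₀ := by
      have hd : DifferentiableAt ℝ (fun x' : EuclideanSpace ℝ (Fin n) => v (x', t)) x₀ :=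
        (hvdiff p).comp x₀ (differentiableAt_id.prodMk (differentiableAt_const t))
      exact hd.hasFDerivAt
    have hterm : ∀ k : Fin n,
        fderiv ℝ (fun x' => c (x', t) * v (x', t) k) x₀ (EuclideanSpace.single k 1)
          = c p * (Dv (EuclideanSpace.single k 1)) k
            + v p k * Dc (EuclideanSpace.single k 1, 0) := by
      intro k
      have hvk0 := (EuclideanSpace.proj k :
        EuclideanSpace ℝ (Fin n) →L[ℝ] ℝ).hasFDerivAt.comp x₀ hvx
      have hvk : HasFDerivAt (fun x' : EuclideanSpace ℝ (Fin n) => v (x', t) k)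
          ((EuclideanSpace.proj k).comp Dv) x₀ := hvk0
      have hml : fderiv ℝ (fun x' => c (x', t) * v (x', t) k) x₀ = _ := (hcx.mul hvk).fderiv
      rw [hml]
      simp [ContinuousLinearMap.inl_apply, mul_comm]
      rfl
    have hDcw : ∀ w : EuclideanSpace ℝ (Fin n),
        Dc (w, (0 : ℝ)) = ∑ k, w k * Dc (EuclideanSpace.single k 1, 0) := by
      intro w
      have e1 : Dc (w, (0 : ℝ))
          = (Dc.comp (ContinuousLinearMap.inl ℝ (EuclideanSpace ℝ (Fin n)) ℝ)) w := by
        simp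
      rw [e1]
      conv_lhs => rw [← hsum w]
      rw [map_sum]
      refine Finset.sum_congr rfl fun k _ => ?_
      simp
    have hDcdecomp : Dc (v p, 1)
        = (∑ k, v p k * Dc (EuclideanSpace.single k 1, 0)) + Dc (0, 1) := by
      have hsplit : ((v p : EuclideanSpace ℝ (Fin n)), (1 : ℝ))
          = ((v p : EuclideanSpace ℝ (Fin n)), (0 : ℝ))
            + ((0 : EuclideanSpace ℝ (Fin n)), (1 : ℝ)) := by simp
      rw [hsplit, map_add, hDcw (v p)]
    have htrace : Matrix.trace A = ∑ k, (Dv (EuclideanSpace.single k 1)) k := by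
      rw [Matrix.trace]
      refine Finset.sum_congr rfl fun k _ => ?_
      rw [Matrix.diag_apply, hA]
      simp only [LinearMap.toMatrix_apply, hrepr, hbase]
      rfl
    have hcont := hcontinuity x₀ t
    rw [hpt] at hcont
    simp only [hterm] at hcont
    have hc0 : Dc (0, 1)
        + (c p * ∑ k, (Dv (EuclideanSpace.single k 1)) k
          + ∑ k, v p k * Dc (EuclideanSpace.single k 1, 0)) = 0 := by
      rw [Finset.sum_add_distrib, ← Finset.mul_sum] at hcont
      linarith
    have hzero : Matrix.trace A * Matrix.det (Matrix.of (M t)) * c p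
        + Matrix.det (Matrix.of (M t)) * Dc (v p, 1) = 0 := by
      rw [htrace, hDcdecomp]
      linear_combination Matrix.det (Matrix.of (M t)) * hc0
    rw [hzero] at hgd
    exact hgd
  have hdiff : Differentiable ℝ g := fun t => (hg0 t).differentiableAt
  have hfz : ∀ t : ℝ, fderiv ℝ g t = 0 := by
    intro t
    have h1 := (hg0 t).hasFDerivAt.fderiv
    rw [h1]
    refine ContinuousLinearMap.ext fun z => ?_
    simp
  exact is_const_of_fderiv_eq_zero hdiff hfz t₁ t₂
end
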